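/- Let N be an N-layer (open or closed) Π³-net with N≥3 and let m0 be any marking. Then for every m∈R(m0): (i) for every 1≤i≤N−2 and every p∈P_i, m(p) ≤ C_i^{m0}; (ii) for every p∈P_{N−1}^{¬max}, m(p) ≤ C_{N−2}^{m0}. -/

import Mathlib

open Finset

section PetriBasics

variable {P T : Type} [Fintype P] [Fintype T]

/-- Transition `t` is enabled at marking `m`. -/
def Enabled (Wm : P → T → ℕ) (m : P → ℕ) (t : T) : Prop :=
  ∀ p, Wm p t ≤ m p

/-- The marking obtained by firing transition `t` at marking `m`. -/
def Fire (Wm Wp : P → T → ℕ) (m : P → ℕ) (t : T) : P → ℕ :=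
  fun p => m p - Wm p t + Wp p t

/-- One firing step. -/
def Step (Wm Wp : P → T → ℕ) (m m' : P → ℕ) : Prop :=
  ∃ t, Enabled Wm m t ∧ m' = Fire Wm Wp m t

/-- Reachability. -/
def Reach (Wm Wp : P → T → ℕ) : (P → ℕ) → (P → ℕ) → Prop :=
  Relation.ReflTransGen (Step Wm Wp)

/-- One firing step using a transition from the set `S`. -/
def StepIn (Wm Wp : P → T → ℕ) (S : T → Prop) (m m' : P → ℕ) : Prop :=
  ∃ t, S t ∧ Enabled Wm m t ∧ m' = Fire Wm Wp m t

/-- Reachability using only transitions from the set `S`. -/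
def ReachIn (Wm Wp : P → T → ℕ) (S : T → Prop) : (P → ℕ) → (P → ℕ) → Prop :=
  Relation.ReflTransGen (StepIn Wm Wp S)

/-- The marked net `(N, m0)` is live. -/
def LiveMarked (Wm Wp : P → T → ℕ) (m0 : P → ℕ) : Prop :=
  ∀ (t : T) (m : P → ℕ), Reach Wm Wp m0 m →
    ∃ m', Reach Wm Wp m m' ∧ Enabled Wm m' t

/-- `b` is a bag of the net. -/
def IsBag (Wm Wp : P → T → ℕ) (b : P → ℕ) : Prop :=
  ∃ t, b = (fun p => Wm p t) ∨ b = (fun p => Wp p t)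

/-- Edges of the bag graph. -/
def BagEdge (Wm Wp : P → T → ℕ) (b b' : P → ℕ) : Prop :=
  ∃ t, b = (fun p => Wm p t) ∧ b' = (fun p => Wp p t)

/-- Every connected component of the bag graph is strongly connected. -/
def WeaklyReversible (Wm Wp : P → T → ℕ) : Prop :=
  ∀ b b' : P → ℕ,
    Relation.ReflTransGen (fun x y => BagEdge Wm Wp x y ∨ BagEdge Wm Wp y x) b b' →
    Relation.ReflTransGen (BagEdge Wm Wp) b b'

/-- `w · W(t)`, where `W = W⁺ − W⁻` is the incidence matrix. -/
def IncDot (Wm Wp : P → T → ℕ) (w : P → ℚ) (t : T) : ℚ :=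
  ∑ p, w p * ((Wp p t : ℚ) - (Wm p t : ℚ))

/-- `w` is a witness of the bag `b`. -/
def IsWitness (Wm Wp : P → T → ℕ) (b : P → ℕ) (w : P → ℚ) : Prop :=
  ∀ t, (b = (fun p => Wm p t) → IncDot Wm Wp w t = -1) ∧
       (b = (fun p => Wp p t) → IncDot Wm Wp w t = 1) ∧
       (b ≠ (fun p => Wm p t) → b ≠ (fun p => Wp p t) → IncDot Wm Wp w t = 0)

/-- `N` is a Π²-net. -/
def IsPi2 (Wm Wp : P → T → ℕ) : Prop :=
  WeaklyReversible Wm Wp ∧ ∀ b, IsBag Wm Wp b → ∃ w, IsWitness Wm Wp b w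

/-- The potential of a place: `‖b_p‖ − 1`. -/
def potOf (bag : P → P → ℕ) (p : P) : ℕ := (∑ q, bag p q) - 1

/-- Minimum of `f` over `S`, with default value `d` when `S` is empty. -/
def minPotD {α : Type} (S : Finset α) (f : α → ℕ) (d : ℕ) : ℕ :=
  if h : S.Nonempty then S.inf' h f else d

end PetriBasics

/-- An `Nn`-layer closed Π³-net. -/
structure ClosedPi3 (P T : Type) [Fintype P] [Fintype T] (Nn : ℕ) where
  Wm : P → T → ℕ
  Wp : P → T → ℕ
  no_useless : ∀ t, (fun p => Wm p t) ≠ (fun p => Wp p t)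
  no_dup : ∀ t t' : T, (fun p => Wm p t) = (fun p => Wm p t') →
      (fun p => Wp p t) = (fun p => Wp p t') → t = t'
  /-- the bag associated with each place -/
  bag : P → P → ℕ
  /-- the layer of each place -/
  layer : P → ℕ
  bag_isBag : ∀ p, IsBag Wm Wp (bag p)
  bag_surj : ∀ b, IsBag Wm Wp b → ∃ p, bag p = b
  bag_inj : Function.Injective bag
  bag_self : ∀ p, bag p p = 1
  layer_pos : ∀ p, 1 ≤ layer p
  layer_le : ∀ p, layer p ≤ Nn
  layer_surj : ∀ i, 1 ≤ i → i ≤ Nn → ∃ p, layer p = i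
  edge_layer : ∀ p q : P, BagEdge Wm Wp (bag p) (bag q) → layer p = layer q
  layer_conn : ∀ p q : P, layer p = layer q →
      Relation.ReflTransGen (BagEdge Wm Wp) (bag p) (bag q)
  resource : ∀ p q : P, q ≠ p → 0 < bag p q →
      layer q + 1 = layer p ∧ ∀ r, layer r = layer q → potOf bag r ≤ potOf bag q

namespace ClosedPi3

variable {P T : Type} [Fintype P] [Fintype T] {Nn : ℕ} (C : ClosedPi3 P T Nn)

def pot (p : P) : ℕ := potOf C.bag p

/-- `P_i`: the places of layer `i`. -/
def places (i : ℕ) : Finset P := Finset.univ.filter (fun p => C.layer p = i)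

/-- `POT_i`: the maximal potential in layer `i`. -/
def POT (i : ℕ) : ℕ := (C.places i).sup C.pot

/-- `P_i^max`: the places of maximal potential in layer `i`. -/
def placesMax (i : ℕ) : Finset P := (C.places i).filter (fun p => C.pot p = C.POT i)

/-- `cin(p) = POT_i − pot(p)` for `p ∈ P_i`. -/
def cin (p : P) : ℤ := (C.POT (C.layer p) : ℤ) - (C.pot p : ℤ)

/-- The invariant vector `v^(i)` (for `i = Nn` this is `v^(N)`). -/
def vvec (i : ℕ) : P → ℤ :=
  if i = Nn then (fun p => if C.layer p = Nn then 1 else 0)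
  else fun p => (if C.layer p = i then 1 else 0) + (if C.layer p = i + 1 then C.cin p else 0)

/-- `m · v^(i)`. -/
def vdot (i : ℕ) (m : P → ℕ) : ℤ := ∑ p, C.vvec i p * (m p : ℤ)

/-- `m ∈ Inv_i(m0)`. -/
def InvSet (m0 : P → ℕ) (i : ℕ) (m : P → ℕ) : Prop := C.vdot i m = C.vdot i m0

/-- `m ∈ Live_i`. -/
def LiveSet (i : ℕ) (m : P → ℕ) : Prop :=
  if i = Nn then 0 < ∑ p ∈ C.places Nn, m p
  else minPotD ((C.places (i + 1)).filter (fun p => 0 < m p)) C.pot (C.POT (i + 1))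
        ≤ ∑ p ∈ C.places i, m p

/-- `t` belongs to `⋃ {T_i | S i}`: the input bag of `t` lies in a layer satisfying `S`. -/
def transIn (S : ℕ → Prop) (t : T) : Prop :=
  ∃ p, S (C.layer p) ∧ C.bag p = (fun q => C.Wm q t)

/-- The marking `m` is `i`-live. -/
def iLive (i : ℕ) (m : P → ℕ) : Prop :=
  ∀ t, C.transIn (· ≤ i) t →
    ∃ m', ReachIn C.Wm C.Wp (C.transIn (· ≤ i)) m m' ∧ Enabled C.Wm m' t

end ClosedPi3

/-- An `Nn`-layer open Π³-net over places `P`: it is obtained from an `Nn`-layer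
closed Π³-net over `Option P` by deleting the place `none` (a.k.a. `p_ext`),
which lies in layer `Nn`. -/
structure OpenPi3 (P T : Type) [Fintype P] [Fintype T] (Nn : ℕ) where
  closed : ClosedPi3 (Option P) T Nn
  pext_layer : closed.layer none = Nn

namespace OpenPi3

variable {P T : Type} [Fintype P] [Fintype T] {Nn : ℕ} (O : OpenPi3 P T Nn)

/-- Backward incidence matrix of the open net. -/
def Wm : P → T → ℕ := fun p t => O.closed.Wm (some p) t

/-- Forward incidence matrix of the open net. -/
def Wp : P → T → ℕ := fun p t => O.closed.Wp (some p) t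

def layer (p : P) : ℕ := O.closed.layer (some p)

def pot (p : P) : ℕ := O.closed.pot (some p)

/-- `pot(p_ext)`. -/
def potExt : ℕ := O.closed.pot none

/-- `P_i`: the (remaining) places of layer `i`. -/
def places (i : ℕ) : Finset P := Finset.univ.filter (fun p => O.layer p = i)

/-- `POT_i`, with `POT_N = pot(p_ext)` for open nets. -/
def POT (i : ℕ) : ℕ := if i = Nn then O.potExt else (O.places i).sup O.pot

def placesMax (i : ℕ) : Finset P := (O.places i).filter (fun p => O.pot p = O.POT i)

def cin (p : P) : ℤ := (O.POT (O.layer p) : ℤ) - (O.pot p : ℤ)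

/-- The invariant vector `v^(i)` (used for `1 ≤ i ≤ Nn − 1`). -/
def vvec (i : ℕ) : P → ℤ :=
  fun p => (if O.layer p = i then 1 else 0) + (if O.layer p = i + 1 then O.cin p else 0)

def vdot (i : ℕ) (m : P → ℕ) : ℤ := ∑ p, O.vvec i p * (m p : ℤ)

def InvSet (m0 : P → ℕ) (i : ℕ) (m : P → ℕ) : Prop :=
  if i = Nn then True else O.vdot i m = O.vdot i m0

/-- `m ∈ Live_i` for the open net: for `i = N − 1` the virtual place `p_ext`
always counts as marked. -/
def LiveSet (i : ℕ) (m : P → ℕ) : Prop :=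
  if i = Nn then True
  else if i + 1 = Nn then
    min O.potExt
        (minPotD ((O.places Nn).filter (fun p => 0 < m p)) O.pot O.potExt)
      ≤ ∑ p ∈ O.places i, m p
  else
    minPotD ((O.places (i + 1)).filter (fun p => 0 < m p)) O.pot (O.POT (i + 1))
      ≤ ∑ p ∈ O.places i, m p

def transIn (S : ℕ → Prop) (t : T) : Prop := O.closed.transIn S t

def iLive (i : ℕ) (m : P → ℕ) : Prop :=
  ∀ t, O.transIn (· ≤ i) t →
    ∃ m', ReachIn O.Wm O.Wp (O.transIn (· ≤ i)) m m' ∧ Enabled O.Wm m' t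

end OpenPi3
section AuxLemmas

variable {P T : Type} [Fintype P] [Fintype T] [DecidableEq P] {Nn : ℕ}

/-- Generic invariance of a linear form along reachability. -/
lemma reach_invariant (Wm Wp : P → T → ℕ) (v : P → ℤ)
    (hv : ∀ t, ∑ p, v p * ((Wp p t : ℤ) - (Wm p t : ℤ)) = 0)
    {m0 m : P → ℕ} (h : Reach Wm Wp m0 m) :
    ∑ p, v p * (m p : ℤ) = ∑ p, v p * (m0 p : ℤ) := by
  induction h with
  | refl => rfl
  | @tail b c _ hstep ih =>
    obtain ⟨t, hen, rfl⟩ := hstep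
    have hc : ∀ p, ((Fire Wm Wp b t) p : ℤ) = (b p : ℤ) + ((Wp p t : ℤ) - (Wm p t : ℤ)) := by
      intro p
      have := hen p
      simp only [Fire]
      omega
    calc ∑ p, v p * ((Fire Wm Wp b t) p : ℤ)
        = ∑ p, (v p * (b p : ℤ) + v p * ((Wp p t : ℤ) - (Wm p t : ℤ))) := by
          refine Finset.sum_congr rfl fun p _ => ?_
          rw [hc p, mul_add]
      _ = (∑ p, v p * (b p : ℤ)) + ∑ p, v p * ((Wp p t : ℤ) - (Wm p t : ℤ)) :=
          Finset.sum_add_distrib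
      _ = ∑ p, v p * (m0 p : ℤ) := by rw [hv t, add_zero, ih]

/-- Generic bound: a single coordinate with coefficient `≥ 1` is bounded by the
nonnegative linear form. -/
lemma coord_le_form (v : P → ℤ) (m : P → ℕ) (hnn : ∀ p, 0 ≤ v p)
    {p0 : P} (h1 : 1 ≤ v p0) : (m p0 : ℤ) ≤ ∑ p, v p * (m p : ℤ) := by
  have h2 : (m p0 : ℤ) ≤ v p0 * (m p0 : ℤ) :=
    le_mul_of_one_le_left (Int.ofNat_nonneg _) h1
  exact h2.trans (Finset.single_le_sum
    (fun p _ => mul_nonneg (hnn p) (Int.ofNat_nonneg _)) (Finset.mem_univ p0))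

namespace ClosedPi3

variable (C : ClosedPi3 P T Nn)

lemma mem_places_self (p : P) : p ∈ C.places (C.layer p) := by
  simp [places]

lemma pot_le_POT (p : P) : C.pot p ≤ C.POT (C.layer p) :=
  Finset.le_sup (C.mem_places_self p)

lemma cin_nonneg (p : P) : 0 ≤ C.cin p := by
  have h := C.pot_le_POT p
  simp only [cin, sub_nonneg]
  exact_mod_cast h

lemma one_le_bagsum (q : P) : 1 ≤ ∑ p, C.bag q p :=
  (C.bag_self q).symm.le.trans
    (Finset.single_le_sum (fun _ _ => Nat.zero_le _) (Finset.mem_univ q))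

lemma pot_cast (q : P) : (C.pot q : ℤ) = (∑ p, (C.bag q p : ℤ)) - 1 := by
  show ((potOf C.bag q : ℕ) : ℤ) = _
  rw [potOf, Nat.cast_sub (C.one_le_bagsum q), Nat.cast_sum, Nat.cast_one]

/-- If `p` has maximal potential in its layer, then `cin p = 0`. -/
lemma cin_eq_zero_of_max (p : P) (hmax : ∀ r, C.layer r = C.layer p → C.pot r ≤ C.pot p) :
    C.cin p = 0 := by
  have h1 : C.POT (C.layer p) ≤ C.pot p := by
    apply Finset.sup_le
    intro r hr
    exact hmax r (by simpa [places] using hr)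
  have h2 := C.pot_le_POT p
  have : C.POT (C.layer p) = C.pot p := le_antisymm h1 h2
  simp [cin, this]

/-- Key computation: `v^(i) · b_q` only depends on the layer of `q`. -/
lemma bagdot {i : ℕ} (hiN : i ≠ Nn) (q : P) :
    ∑ p, C.vvec i p * (C.bag q p : ℤ) =
      if C.layer q = i then 1
      else if C.layer q = i + 1 then (C.POT (i + 1) : ℤ) else 0 := by
  have hv : ∀ p, C.vvec i p =
      (if C.layer p = i then 1 else 0) + (if C.layer p = i + 1 then C.cin p else 0) := by
    intro p; simp [vvec, hiN]
  -- for `p ≠ q`, the term is `bag q p` if `layer p = i`, and `0` otherwise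
  have hterm : ∀ p, p ≠ q →
      C.vvec i p * (C.bag q p : ℤ) = (if C.layer p = i then (C.bag q p : ℤ) else 0) := by
    intro p hpq
    rcases Nat.eq_zero_or_pos (C.bag q p) with h0 | h0
    · simp [h0]
    · obtain ⟨hl, hmax⟩ := C.resource q p hpq h0
      have hcin : C.cin p = 0 := C.cin_eq_zero_of_max p hmax
      rw [hv p]
      split_ifs with h1 h2 h2
      · omega
      · ring
      · simp [hcin]
      · ring
  rw [Fintype.sum_eq_add_sum_compl q]
  have hrest : ∑ p ∈ {q}ᶜ, C.vvec i p * (C.bag q p : ℤ)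
      = ∑ p ∈ {q}ᶜ, (if C.layer p = i then (C.bag q p : ℤ) else 0) := by
    refine Finset.sum_congr rfl fun p hp => hterm p ?_
    simpa using hp
  rw [hrest, hv q, C.bag_self q]
  by_cases hq1 : C.layer q = i
  · have : ∑ p ∈ {q}ᶜ, (if C.layer p = i then (C.bag q p : ℤ) else 0) = 0 := by
      refine Finset.sum_eq_zero fun p hp => ?_
      have hpq : p ≠ q := by simpa using hp
      split_ifs with h
      · rcases Nat.eq_zero_or_pos (C.bag q p) with h0 | h0
        · simp [h0]
        · obtain ⟨hl, _⟩ := C.resource q p hpq h0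
          omega
      · rfl
    rw [this]
    have hq2 : C.layer q ≠ i + 1 := by omega
    simp [hq1, hq2]
  · by_cases hq2 : C.layer q = i + 1
    · have h1 : ∑ p ∈ {q}ᶜ, (if C.layer p = i then (C.bag q p : ℤ) else 0)
          = ∑ p ∈ {q}ᶜ, (C.bag q p : ℤ) := by
        refine Finset.sum_congr rfl fun p hp => ?_
        have hpq : p ≠ q := by simpa using hp
        split_ifs with h
        · rfl
        · rcases Nat.eq_zero_or_pos (C.bag q p) with h0 | h0
          · simp [h0]
          · obtain ⟨hl, _⟩ := C.resource q p hpq h0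
            omega
      have h2 : ∑ p ∈ {q}ᶜ, (C.bag q p : ℤ) = (∑ p, (C.bag q p : ℤ)) - (C.bag q q : ℤ) := by
        rw [Fintype.sum_eq_add_sum_compl q (fun p => (C.bag q p : ℤ))]
        ring
      have hcin : C.cin q = (C.POT (i + 1) : ℤ) - (C.pot q : ℤ) := by
        simp [cin, hq2]
      rw [h1, h2, C.bag_self q, hcin]
      have hpc := C.pot_cast q
      simp only [hq1, hq2, if_false, if_true, Nat.cast_one]
      push_cast
      omega
    · have : ∑ p ∈ {q}ᶜ, (if C.layer p = i then (C.bag q p : ℤ) else 0) = 0 := by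
        refine Finset.sum_eq_zero fun p hp => ?_
        have hpq : p ≠ q := by simpa using hp
        split_ifs with h
        · rcases Nat.eq_zero_or_pos (C.bag q p) with h0 | h0
          · simp [h0]
          · obtain ⟨hl, _⟩ := C.resource q p hpq h0
            omega
        · rfl
      rw [this]
      simp [hq1, hq2]

/-- `v^(i) · W(t) = 0` for every transition `t`. -/
lemma incidence_zero {i : ℕ} (hiN : i ≠ Nn) (t : T) :
    ∑ p, C.vvec i p * ((C.Wp p t : ℤ) - (C.Wm p t : ℤ)) = 0 := by
  obtain ⟨qm, hqm⟩ := C.bag_surj (fun p => C.Wm p t) ⟨t, Or.inl rfl⟩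
  obtain ⟨qp, hqp⟩ := C.bag_surj (fun p => C.Wp p t) ⟨t, Or.inr rfl⟩
  have hlay : C.layer qm = C.layer qp := C.edge_layer _ _ ⟨t, hqm, hqp⟩
  have h1 := C.bagdot hiN qm
  have h2 := C.bagdot hiN qp
  have e1 : ∀ p, (C.Wm p t : ℤ) = (C.bag qm p : ℤ) := fun p => by rw [hqm]
  have e2 : ∀ p, (C.Wp p t : ℤ) = (C.bag qp p : ℤ) := fun p => by rw [hqp]
  calc ∑ p, C.vvec i p * ((C.Wp p t : ℤ) - (C.Wm p t : ℤ))
      = ∑ p, (C.vvec i p * (C.bag qp p : ℤ) - C.vvec i p * (C.bag qm p : ℤ)) := by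
        refine Finset.sum_congr rfl fun p _ => ?_
        rw [e1 p, e2 p]; ring
    _ = (∑ p, C.vvec i p * (C.bag qp p : ℤ)) - ∑ p, C.vvec i p * (C.bag qm p : ℤ) :=
        Finset.sum_sub_distrib _ _
    _ = 0 := by rw [h1, h2, hlay]; ring

lemma vvec_nonneg {i : ℕ} (hiN : i ≠ Nn) (p : P) : 0 ≤ C.vvec i p := by
  have := C.cin_nonneg p
  simp only [vvec, hiN, if_false]
  positivity

lemma vvec_layer_eq {i : ℕ} (hiN : i ≠ Nn) (p : P) (hp : C.layer p = i) :
    C.vvec i p = 1 := by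
  have : C.layer p ≠ i + 1 := by omega
  simp [vvec, hiN, hp, this]

lemma vvec_layer_succ {i : ℕ} (hiN : i ≠ Nn) (p : P) (hp : C.layer p = i + 1) :
    C.vvec i p = C.cin p := by
  have : C.layer p ≠ i := by omega
  simp [vvec, hiN, hp, this]

end ClosedPi3

namespace OpenPi3

variable (O : OpenPi3 P T Nn)

lemma mem_places_self (p : P) : p ∈ O.places (O.layer p) := by
  simp [places]

lemma POT_eq_sup {j : ℕ} (hj : j ≠ Nn) : O.POT j = (O.places j).sup O.pot := by
  simp [POT, hj]

lemma pot_le_POT {j : ℕ} (hj : j ≠ Nn) (p : P) (hp : O.layer p = j) :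
    O.pot p ≤ O.POT j := by
  rw [O.POT_eq_sup hj]
  exact Finset.le_sup (by simpa [places] using hp)

lemma cin_nonneg (p : P) (hp : O.layer p ≠ Nn) : 0 ≤ O.cin p := by
  have h := O.pot_le_POT hp p rfl
  simp only [cin, sub_nonneg]
  exact_mod_cast h

/-- Transfer of `POT` from the closed net, away from the top layer. -/
lemma POT_eq_closed {j : ℕ} (hj : j ≠ Nn) : O.POT j = O.closed.POT j := by
  rw [O.POT_eq_sup hj]
  apply le_antisymm
  · apply Finset.sup_le
    intro p hp
    have hp' : O.layer p = j := by simpa [places] using hp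
    exact Finset.le_sup (s := O.closed.places j)
      (Finset.mem_filter.mpr ⟨Finset.mem_univ _, hp'⟩)
  · apply Finset.sup_le
    intro o ho
    have ho' : O.closed.layer o = j := by simpa [ClosedPi3.places] using ho
    match o with
    | none => exact absurd (O.pext_layer ▸ ho') (Ne.symm hj)
    | some p =>
      exact Finset.le_sup (s := O.places j) (f := O.pot) (Finset.mem_filter.mpr ⟨Finset.mem_univ _, ho'⟩)

lemma vvec_eq_closed {i : ℕ} (hiN : i ≠ Nn) (hiN1 : i + 1 ≠ Nn) (p : P) :
    O.vvec i p = O.closed.vvec i (some p) := by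
  simp only [vvec, ClosedPi3.vvec, hiN, if_false]
  have hl : O.closed.layer (some p) = O.layer p := rfl
  rw [hl]
  by_cases h : O.layer p = i + 1
  · have hc : O.cin p = O.closed.cin (some p) := by
      simp only [cin, ClosedPi3.cin, hl, h]
      rw [O.POT_eq_closed hiN1]
      rfl
    rw [hc]
  · simp [h]

lemma closed_vvec_none {i : ℕ} (hiN : i ≠ Nn) (hiN1 : i + 1 ≠ Nn) :
    O.closed.vvec i none = 0 := by
  have h1 : O.closed.layer none = Nn := O.pext_layer
  have h2 : O.closed.layer none ≠ i := by omega
  have h3 : O.closed.layer none ≠ i + 1 := by omega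
  simp [ClosedPi3.vvec, hiN, h2, h3]

lemma incidence_zero {i : ℕ} (hiN : i ≠ Nn) (hiN1 : i + 1 ≠ Nn) (t : T) :
    ∑ p, O.vvec i p * ((O.Wp p t : ℤ) - (O.Wm p t : ℤ)) = 0 := by
  have hclosed := O.closed.incidence_zero hiN t
  rw [Fintype.sum_option] at hclosed
  rw [O.closed_vvec_none hiN hiN1, zero_mul, zero_add] at hclosed
  calc ∑ p, O.vvec i p * ((O.Wp p t : ℤ) - (O.Wm p t : ℤ))
      = ∑ p, O.closed.vvec i (some p) *
          ((O.closed.Wp (some p) t : ℤ) - (O.closed.Wm (some p) t : ℤ)) := by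
        refine Finset.sum_congr rfl fun p _ => ?_
        rw [O.vvec_eq_closed hiN hiN1]
        rfl
    _ = 0 := hclosed

lemma vvec_nonneg {i : ℕ} (hiN1 : i + 1 ≠ Nn) (p : P) : 0 ≤ O.vvec i p := by
  simp only [vvec]
  by_cases h : O.layer p = i + 1
  · have := O.cin_nonneg p (by omega)
    positivity
  · simp [h]
    positivity

lemma vvec_layer_eq (i : ℕ) (p : P) (hp : O.layer p = i) : O.vvec i p = 1 := by
  have : O.layer p ≠ i + 1 := by omega
  simp [vvec, hp, this]

lemma vvec_layer_succ (i : ℕ) (p : P) (hp : O.layer p = i + 1) (hi : O.layer p ≠ i) :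
    O.vvec i p = O.cin p := by
  simp [vvec, hp, hi]

end OpenPi3

end AuxLemmas

/-- bounds on places of small layers of an N-layer (open or
closed) Π³-net with `N ≥ 3`: for reachable `m`, `m(p) ≤ C_i^{m0}` when
`p ∈ P_i`, `i ≤ N−2`, and `m(p) ≤ C_{N−2}^{m0}` when `p ∈ P_{N−1}^{¬max}`. -/
theorem stmt_17 :
    (∀ (P T : Type) [Fintype P] [Fintype T] [DecidableEq P] (Nn : ℕ),
      3 ≤ Nn → ∀ (C : ClosedPi3 P T Nn) (m0 m : P → ℕ),
        Reach C.Wm C.Wp m0 m →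
          (∀ i ∈ Finset.Icc 1 (Nn - 2), ∀ p ∈ C.places i,
            (m p : ℤ) ≤ C.vdot i m0) ∧
          (∀ p ∈ C.places (Nn - 1) \ C.placesMax (Nn - 1),
            (m p : ℤ) ≤ C.vdot (Nn - 2) m0)) ∧
    (∀ (P T : Type) [Fintype P] [Fintype T] [DecidableEq P] (Nn : ℕ),
      3 ≤ Nn → ∀ (O : OpenPi3 P T Nn) (m0 m : P → ℕ),
        Reach O.Wm O.Wp m0 m →
          (∀ i ∈ Finset.Icc 1 (Nn - 2), ∀ p ∈ O.places i,
            (m p : ℤ) ≤ O.vdot i m0) ∧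
          (∀ p ∈ O.places (Nn - 1) \ O.placesMax (Nn - 1),
            (m p : ℤ) ≤ O.vdot (Nn - 2) m0)) := by
  constructor
  · -- closed case
    intro P T _ _ _ Nn hNn C m0 m hreach
    have hinv : ∀ i, i ≠ Nn → C.vdot i m = C.vdot i m0 := fun i hi =>
      reach_invariant C.Wm C.Wp (C.vvec i) (C.incidence_zero hi) hreach
    constructor
    · intro i hi p hp
      simp only [Finset.mem_Icc] at hi
      have hiN : i ≠ Nn := by omega
      have hlay : C.layer p = i := by simpa [ClosedPi3.places] using hp
      have hb : (m p : ℤ) ≤ ∑ q, C.vvec i q * (m q : ℤ) :=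
        coord_le_form (C.vvec i) m (C.vvec_nonneg hiN)
          (by rw [C.vvec_layer_eq hiN p hlay])
      calc (m p : ℤ) ≤ C.vdot i m := hb
        _ = C.vdot i m0 := hinv i hiN
    · intro p hp
      set i := Nn - 2 with hidef
      have hiN : i ≠ Nn := by omega
      have hi1 : i + 1 = Nn - 1 := by omega
      rw [Finset.mem_sdiff] at hp
      obtain ⟨hp1, hp2⟩ := hp
      have hlay : C.layer p = Nn - 1 := by
        simpa [ClosedPi3.places] using hp1
      have hne : C.pot p ≠ C.POT (Nn - 1) := by
        intro h
        exact hp2 (by simp [ClosedPi3.placesMax, ClosedPi3.places, hlay, h])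
      have hle : C.pot p ≤ C.POT (Nn - 1) := by
        have := C.pot_le_POT p
        rwa [hlay] at this
      have hcin : 1 ≤ C.cin p := by
        have hlt : C.pot p < C.POT (Nn - 1) := lt_of_le_of_ne hle hne
        simp only [ClosedPi3.cin, hlay]
        omega
      have hb : (m p : ℤ) ≤ ∑ q, C.vvec i q * (m q : ℤ) :=
        coord_le_form (C.vvec i) m (C.vvec_nonneg hiN)
          (by rw [C.vvec_layer_succ hiN p (by omega)]; exact hcin)
      calc (m p : ℤ) ≤ C.vdot i m := hb
        _ = C.vdot i m0 := hinv i hiN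
  · -- open case
    intro P T _ _ _ Nn hNn O m0 m hreach
    have hinv : ∀ i, i ≠ Nn → i + 1 ≠ Nn → O.vdot i m = O.vdot i m0 := fun i hi hi1 =>
      reach_invariant O.Wm O.Wp (O.vvec i) (O.incidence_zero hi hi1) hreach
    constructor
    · intro i hi p hp
      simp only [Finset.mem_Icc] at hi
      have hiN : i ≠ Nn := by omega
      have hiN1 : i + 1 ≠ Nn := by omega
      have hlay : O.layer p = i := by simpa [OpenPi3.places] using hp
      have hb : (m p : ℤ) ≤ ∑ q, O.vvec i q * (m q : ℤ) :=
        coord_le_form (O.vvec i) m (O.vvec_nonneg hiN1)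
          (by rw [O.vvec_layer_eq i p hlay])
      calc (m p : ℤ) ≤ O.vdot i m := hb
        _ = O.vdot i m0 := hinv i hiN hiN1
    · intro p hp
      set i := Nn - 2 with hidef
      have hiN : i ≠ Nn := by omega
      have hiN1 : i + 1 ≠ Nn := by omega
      have hi1 : i + 1 = Nn - 1 := by omega
      rw [Finset.mem_sdiff] at hp
      obtain ⟨hp1, hp2⟩ := hp
      have hlay : O.layer p = Nn - 1 := by
        simpa [OpenPi3.places] using hp1
      have hne : O.pot p ≠ O.POT (Nn - 1) := by
        intro h
        exact hp2 (by simp [OpenPi3.placesMax, OpenPi3.places, hlay, h])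
      have hle : O.pot p ≤ O.POT (Nn - 1) :=
        O.pot_le_POT (by omega) p hlay
      have hcin : 1 ≤ O.cin p := by
        have hlt : O.pot p < O.POT (Nn - 1) := lt_of_le_of_ne hle hne
        simp only [OpenPi3.cin, hlay]
        omega
      have hb : (m p : ℤ) ≤ ∑ q, O.vvec i q * (m q : ℤ) :=
        coord_le_form (O.vvec i) m (O.vvec_nonneg hiN1)
          (by rw [O.vvec_layer_succ i p (by omega) (by omega)]; exact hcin)
      calc (m p : ℤ) ≤ O.vdot i m := hb
        _ = O.vdot i m0 := hinv i hiN hiN1
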